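/- arXiv:2012.04688 — 2 statements merged into one kernel-verified Lean document; each statement's English description precedes it below -/
import Mathlib

section
/- Simplified S-lemma: Let A, D ∈ ℝ^{n×n} be symmetric, b, e ∈ ℝⁿ, c, f ∈ ℝ. Suppose there exists z₀ ∈ ℝⁿ with z₀ᵀAz₀ + 2bᵀz₀ + c > 0, and there exist an invertible matrix S ∈ ℝ^{n×n} and vectors α, δ ∈ ℝⁿ with SᵀAS = diag(α₁, …, αₙ) and SᵀDS = diag(δ₁, …, δₙ). Set ε = Sᵀe and β = Sᵀb. Then the implication (for all z ∈ ℝⁿ: zᵀAz + 2bᵀz + c ≥ 0 implies zᵀDz + 2eᵀz + f ≥ 0) holds if and only if there exist λ ≥ 0 and t ∈ ℝⁿ such that f − λc ≥ Σᵢ tᵢ and (εᵢ − λβᵢ, tᵢ, δᵢ − λαᵢ) ∈ Q for every i ∈ {1, …, n}. -/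
open Matrix

/-- The set `Q = {(x, y, z) ∈ ℝ³ : ‖(2x, y − z)‖₂ ≤ y + z}`. -/
def socQ : Set (ℝ × ℝ × ℝ) :=
  {p | Real.sqrt (4 * p.1 ^ 2 + (p.2.1 - p.2.2) ^ 2) ≤ p.2.1 + p.2.2}

lemma mem_socQ {x y z : ℝ} :
    (x, y, z) ∈ socQ ↔ 0 ≤ y ∧ 0 ≤ z ∧ x ^ 2 ≤ y * z := by
  unfold socQ
  simp only [Set.mem_setOf_eq, Real.sqrt_le_iff]
  constructor
  · rintro ⟨h1, h2⟩
    have hyz : x ^ 2 ≤ y * z := by nlinarith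
    have hy : 0 ≤ y := by nlinarith [sq_nonneg x]
    have hz : 0 ≤ z := by nlinarith [sq_nonneg x]
    exact ⟨hy, hz, hyz⟩
  · rintro ⟨hy, hz, hxyz⟩
    constructor
    · linarith
    · nlinarith

/-- If a quadratic is nonneg everywhere, its leading coefficient is nonneg. -/
lemma quad_lead_nonneg {a b c : ℝ} (h : ∀ x : ℝ, 0 ≤ a * x ^ 2 + b * x + c) : 0 ≤ a := by
  by_contra ha
  push_neg at ha
  set x₀ := Real.sqrt ((|b| + |c| + 1) / (-a)) with hx₀
  have hx2 : x₀ ^ 2 = (|b| + |c| + 1) / (-a) := by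
    apply Real.sq_sqrt
    apply div_nonneg (by positivity) (by linarith)
  have h1 := h x₀
  have h2 := h (-x₀)
  have hax : a * x₀ ^ 2 = -(|b| + |c| + 1) := by
    rw [hx2]
    have : (-a) ≠ 0 := by linarith
    field_simp
    rw [div_self (by linarith : a ≠ 0)]
  nlinarith [abs_nonneg b, abs_nonneg c, le_abs_self c]

lemma lin_nonneg_zero {b c : ℝ} (h : ∀ x : ℝ, 0 ≤ b * x + c) : b = 0 := by
  by_contra hb
  have h1 := h (-(|c| + 1) / b)
  rw [mul_div_assoc', mul_comm, mul_div_assoc, div_self hb, mul_one] at h1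
  nlinarith [le_abs_self c]

/-- Core path lemma for Dines' theorem. -/
lemma dines_core (L B m₁ m₂ C target : ℝ) (ht : target ∈ Set.uIcc m₁ m₂) :
    ∃ u s : ℝ, u ^ 2 * L + 2 * u * s * B + s ^ 2 * L = L ∧
      u ^ 2 * m₁ + 2 * u * s * C + s ^ 2 * m₂ = target := by
  by_cases hL : L = 0
  · by_cases hB : B = 0
    · -- straight path, IVT
      subst hL hB
      have hcont : ContinuousOn (fun θ : ℝ => (1 - θ) ^ 2 * m₁ + 2 * (1 - θ) * θ * C + θ ^ 2 * m₂)
          (Set.uIcc 0 1) := (by continuity : Continuous _).continuousOn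
      have hmem : target ∈ Set.uIcc ((1-(0:ℝ))^2*m₁ + 2*(1-0)*0*C + 0^2*m₂)
          ((1-(1:ℝ))^2*m₁ + 2*(1-1)*1*C + 1^2*m₂) := by
        convert ht using 2 <;> ring
      obtain ⟨θ, _, hθ⟩ := intermediate_value_uIcc hcont hmem
      exact ⟨1 - θ, θ, by ring, hθ⟩
    · -- L = 0, B ≠ 0 : need u*s = 0
      subst hL
      rcases le_or_gt 0 target with h0 | h0
      · rcases eq_or_lt_of_le h0 with h0' | h0'
        · exact ⟨0, 0, by ring, by rw [← h0']; ring⟩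
        · have hmax : target ≤ max m₁ m₂ := by
            rcases Set.mem_uIcc.1 ht with ⟨_, h⟩ | ⟨_, h⟩
            · exact h.trans (le_max_right _ _)
            · exact h.trans (le_max_left _ _)
          rcases le_max_iff.1 hmax with hm | hm
          · have hm₁ : 0 < m₁ := lt_of_lt_of_le h0' hm
            refine ⟨Real.sqrt (target / m₁), 0, by ring, ?_⟩
            rw [Real.sq_sqrt (by positivity)]
            simp [div_mul_cancel₀ target hm₁.ne']
          · have hm₂ : 0 < m₂ := lt_of_lt_of_le h0' hm
            refine ⟨0, Real.sqrt (target / m₂), by ring, ?_⟩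
            rw [Real.sq_sqrt (by positivity)]
            simp [div_mul_cancel₀ target hm₂.ne']
      · have hmin : min m₁ m₂ ≤ target := by
          rcases Set.mem_uIcc.1 ht with ⟨h, _⟩ | ⟨h, _⟩
          · exact (min_le_left _ _).trans h
          · exact (min_le_right _ _).trans h
        rcases min_le_iff.1 hmin with hm | hm
        · have hm₁ : m₁ < 0 := lt_of_le_of_lt hm h0
          refine ⟨Real.sqrt (target / m₁), 0, by ring, ?_⟩
          rw [Real.sq_sqrt (by rw [div_nonneg_iff]; right; exact ⟨h0.le, hm₁.le⟩)]
          simp [div_mul_cancel₀ target hm₁.ne]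
        · have hm₂ : m₂ < 0 := lt_of_le_of_lt hm h0
          refine ⟨0, Real.sqrt (target / m₂), by ring, ?_⟩
          rw [Real.sq_sqrt (by rw [div_nonneg_iff]; right; exact ⟨h0.le, hm₂.le⟩)]
          simp [div_mul_cancel₀ target hm₂.ne]
  · -- L ≠ 0 : quarter-circle path via rational parametrization
    set σ : ℝ := if 0 ≤ B * L then 1 else -1 with hσ
    have hσ2 : σ ^ 2 = 1 := by rcases ite_eq_or_eq (0 ≤ B * L) (1:ℝ) (-1) with h | h <;>
      rw [hσ, h] <;> ring
    have hσBL : 0 ≤ σ * B * L := by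
      rcases le_or_gt 0 (B * L) with h | h
      · rw [hσ, if_pos h]; linarith
      · rw [hσ, if_neg (not_le.2 h)]; nlinarith
    have hden : ∀ t : ℝ, (1 : ℝ) + t ^ 2 ≠ 0 := fun t => by positivity
    set cc : ℝ → ℝ := fun t => (1 - t ^ 2) / (1 + t ^ 2) with hcc
    set ss : ℝ → ℝ := fun t => 2 * t / (1 + t ^ 2) with hss
    have hc : Continuous cc := Continuous.div (by continuity) (by continuity) hden
    have hs : Continuous ss := Continuous.div (by continuity) (by continuity) hden
    set Dd : ℝ → ℝ := fun t => L + 2 * σ * B * (cc t * ss t) with hDd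
    have hDc : Continuous Dd := continuous_const.add (continuous_const.mul (hc.mul hs))
    have hcs1 : ∀ t : ℝ, cc t ^ 2 + ss t ^ 2 = 1 := by
      intro t; rw [hcc, hss]; field_simp; ring
    have hDpos : ∀ t ∈ Set.uIcc (0:ℝ) 1, 0 < L * Dd t := by
      intro t htm
      rw [Set.uIcc_of_le (by norm_num)] at htm
      obtain ⟨h0, h1⟩ := htm
      have hcsval : cc t * ss t = (2 * t * (1 - t ^ 2)) / ((1 + t ^ 2) ^ 2) := by
        rw [hcc, hss]; field_simp
      have hcsnn : 0 ≤ cc t * ss t := by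
        rw [hcsval]
        apply div_nonneg (by nlinarith) (by positivity)
      have hq : L * Dd t = L ^ 2 + 2 * (σ * B * L) * (cc t * ss t) := by rw [hDd]; ring
      rw [hq]
      nlinarith [mul_nonneg hσBL hcsnn, sq_abs L, abs_pos.2 hL, pow_pos (abs_pos.2 hL) 2]
    have hDne : ∀ t ∈ Set.uIcc (0:ℝ) 1, Dd t ≠ 0 := by
      intro t htm h
      have := hDpos t htm
      rw [h, mul_zero] at this
      exact lt_irrefl 0 this
    set ff : ℝ → ℝ := fun t =>
      (L / Dd t) * (cc t ^ 2 * m₁ + 2 * σ * (cc t * ss t) * C + ss t ^ 2 * m₂) with hff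
    have hcont : ContinuousOn ff (Set.uIcc (0:ℝ) 1) := by
      apply ContinuousOn.mul
      · exact ContinuousOn.div continuousOn_const hDc.continuousOn hDne
      · apply Continuous.continuousOn
        exact (((hc.pow 2).mul continuous_const).add
          ((continuous_const.mul (hc.mul hs)).mul continuous_const)).add
          ((hs.pow 2).mul continuous_const)
    have hc0 : cc 0 = 1 := by rw [hcc]; norm_num
    have hs0 : ss 0 = 0 := by rw [hss]; norm_num
    have hc1 : cc 1 = 0 := by rw [hcc]; norm_num
    have hs1 : ss 1 = 1 := by rw [hss]; norm_num
    have hf0 : ff 0 = m₁ := by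
      rw [hff]; simp only [hDd, hc0, hs0]; field_simp; simp [hL]
    have hf1 : ff 1 = m₂ := by
      rw [hff]; simp only [hDd, hc1, hs1]; field_simp; simp [hL]
    have hmem : target ∈ Set.uIcc (ff 0) (ff 1) := by rw [hf0, hf1]; exact ht
    obtain ⟨t₀, ht₀, hft₀⟩ := intermediate_value_uIcc hcont hmem
    have hD0 := hDpos t₀ ht₀
    have hDn0 := hDne t₀ ht₀
    have hLD : 0 < L / Dd t₀ := by
      rcases lt_or_gt_of_ne hL with h | h
      · exact div_pos_of_neg_of_neg h (by nlinarith)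
      · exact div_pos h (by nlinarith)
    set r : ℝ := Real.sqrt (L / Dd t₀) with hr
    have hr2 : r ^ 2 = L / Dd t₀ := Real.sq_sqrt hLD.le
    refine ⟨r * cc t₀, σ * (r * ss t₀), ?_, ?_⟩
    · have hexp : (r * cc t₀) ^ 2 * L + 2 * (r * cc t₀) * (σ * (r * ss t₀)) * B
          + (σ * (r * ss t₀)) ^ 2 * L = r ^ 2 * ((cc t₀ ^ 2 + ss t₀ ^ 2) * L
          + 2 * σ * B * (cc t₀ * ss t₀)) := by linear_combination (r * ss t₀) ^ 2 * L * hσ2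
      rw [hexp, hcs1, hr2, one_mul]
      have : L + 2 * σ * B * (cc t₀ * ss t₀) = Dd t₀ := by rw [hDd]
      rw [this]
      field_simp
    · have hexp : (r * cc t₀) ^ 2 * m₁ + 2 * (r * cc t₀) * (σ * (r * ss t₀)) * C
          + (σ * (r * ss t₀)) ^ 2 * m₂ = r ^ 2 * (cc t₀ ^ 2 * m₁
          + 2 * σ * (cc t₀ * ss t₀) * C + ss t₀ ^ 2 * m₂) := by linear_combination (r * ss t₀) ^ 2 * m₂ * hσ2
      rw [hexp, hr2, ← hft₀, hff]

lemma mem_uIcc_comb (m₁ m₂ tt : ℝ) (h0 : 0 ≤ tt) (h1 : tt ≤ 1) :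
    tt * m₁ + (1 - tt) * m₂ ∈ Set.uIcc m₁ m₂ := by
  rw [Set.uIcc_eq_union, Set.mem_union]
  rcases le_total m₁ m₂ with h | h
  · left; constructor <;> nlinarith
  · right; constructor <;> nlinarith

/-- Dines' theorem: the joint image of two quadratic forms is convex. -/
lemma dines {V : Type*} [AddCommGroup V] [Module ℝ V] (P Q : V → V → ℝ)
    (hP : ∀ (u s : ℝ) (v₁ v₂ : V), P (u • v₁ + s • v₂) (u • v₁ + s • v₂) =
      u ^ 2 * P v₁ v₁ + 2 * u * s * P v₁ v₂ + s ^ 2 * P v₂ v₂)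
    (hQ : ∀ (u s : ℝ) (v₁ v₂ : V), Q (u • v₁ + s • v₂) (u • v₁ + s • v₂) =
      u ^ 2 * Q v₁ v₁ + 2 * u * s * Q v₁ v₂ + s ^ 2 * Q v₂ v₂) :
    Convex ℝ {p : ℝ × ℝ | ∃ v : V, p = (P v v, Q v v)} := by
  rintro p₁ ⟨v₁, rfl⟩ p₂ ⟨v₂, rfl⟩ tt uu htt huu httuu
  have huu' : uu = 1 - tt := by linarith
  subst huu'
  have h1 : tt ≤ 1 := by linarith
  by_cases hEq : (P v₁ v₁ = P v₂ v₂) ∧ (Q v₁ v₁ = Q v₂ v₂)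
  · refine ⟨v₁, ?_⟩
    obtain ⟨e₁, e₂⟩ := hEq
    simp only [Prod.smul_mk, smul_eq_mul, Prod.mk_add_mk, Prod.mk.injEq]
    constructor <;> [rw [← e₁]; rw [← e₂]] <;> ring
  · obtain ⟨u, s, hcon, hM⟩ := dines_core
      ((Q v₂ v₂ - Q v₁ v₁) * P v₁ v₁ - (P v₂ v₂ - P v₁ v₁) * Q v₁ v₁)
      ((Q v₂ v₂ - Q v₁ v₁) * P v₁ v₂ - (P v₂ v₂ - P v₁ v₁) * Q v₁ v₂)
      ((P v₂ v₂ - P v₁ v₁) * P v₁ v₁ + (Q v₂ v₂ - Q v₁ v₁) * Q v₁ v₁)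
      ((P v₂ v₂ - P v₁ v₁) * P v₂ v₂ + (Q v₂ v₂ - Q v₁ v₁) * Q v₂ v₂)
      ((P v₂ v₂ - P v₁ v₁) * P v₁ v₂ + (Q v₂ v₂ - Q v₁ v₁) * Q v₁ v₂)
      (tt * ((P v₂ v₂ - P v₁ v₁) * P v₁ v₁ + (Q v₂ v₂ - Q v₁ v₁) * Q v₁ v₁)
        + (1 - tt) * ((P v₂ v₂ - P v₁ v₁) * P v₂ v₂ + (Q v₂ v₂ - Q v₁ v₁) * Q v₂ v₂))
      (mem_uIcc_comb _ _ tt htt h1)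
    refine ⟨u • v₁ + s • v₂, ?_⟩
    have hPv := hP u s v₁ v₂
    have hQv := hQ u s v₁ v₂
    have hdd : 0 < (P v₂ v₂ - P v₁ v₁) ^ 2 + (Q v₂ v₂ - Q v₁ v₁) ^ 2 := by
      rcases not_and_or.1 hEq with h | h
      · have : P v₂ v₂ - P v₁ v₁ ≠ 0 := fun hc => h (by linarith)
        positivity
      · have : Q v₂ v₂ - Q v₁ v₁ ≠ 0 := fun hc => h (by linarith)
        positivity
    have key1 : ((P v₂ v₂ - P v₁ v₁) ^ 2 + (Q v₂ v₂ - Q v₁ v₁) ^ 2) *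
        (P (u • v₁ + s • v₂) (u • v₁ + s • v₂)) =
        ((P v₂ v₂ - P v₁ v₁) ^ 2 + (Q v₂ v₂ - Q v₁ v₁) ^ 2) *
        (tt * P v₁ v₁ + (1 - tt) * P v₂ v₂) := by
      linear_combination (Q v₂ v₂ - Q v₁ v₁) * hcon + (P v₂ v₂ - P v₁ v₁) * hM
        + ((P v₂ v₂ - P v₁ v₁) ^ 2 + (Q v₂ v₂ - Q v₁ v₁) ^ 2) * hPv
    have key2 : ((P v₂ v₂ - P v₁ v₁) ^ 2 + (Q v₂ v₂ - Q v₁ v₁) ^ 2) *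
        (Q (u • v₁ + s • v₂) (u • v₁ + s • v₂)) =
        ((P v₂ v₂ - P v₁ v₁) ^ 2 + (Q v₂ v₂ - Q v₁ v₁) ^ 2) *
        (tt * Q v₁ v₁ + (1 - tt) * Q v₂ v₂) := by
      linear_combination (-(P v₂ v₂ - P v₁ v₁)) * hcon + (Q v₂ v₂ - Q v₁ v₁) * hM
        + ((P v₂ v₂ - P v₁ v₁) ^ 2 + (Q v₂ v₂ - Q v₁ v₁) ^ 2) * hQv
    have g1 := mul_left_cancel₀ hdd.ne' key1
    have g2 := mul_left_cancel₀ hdd.ne' key2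
    simp only [Prod.smul_mk, smul_eq_mul, Prod.mk_add_mk, Prod.mk.injEq]
    exact ⟨g1.symm, g2.symm⟩

section diag

variable {n : ℕ}

/-- quadratic part -/
noncomputable def qf (α : Fin n → ℝ) (w : Fin n → ℝ) : ℝ := ∑ i, α i * w i * w i
/-- linear part -/
noncomputable def lf (β : Fin n → ℝ) (w : Fin n → ℝ) : ℝ := ∑ i, β i * w i

lemma qf_expand (α : Fin n → ℝ) (u s : ℝ) (v w : Fin n → ℝ) :
    qf α (u • v + s • w) = u ^ 2 * qf α v + 2 * u * s * (∑ i, α i * v i * w i)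
      + s ^ 2 * qf α w := by
  unfold qf
  rw [Finset.mul_sum, Finset.mul_sum, Finset.mul_sum, ← Finset.sum_add_distrib,
    ← Finset.sum_add_distrib]
  exact Finset.sum_congr rfl fun i _ => by simp [Pi.add_apply, Pi.smul_apply, smul_eq_mul]; ring

lemma lf_expand (β : Fin n → ℝ) (u s : ℝ) (v w : Fin n → ℝ) :
    lf β (u • v + s • w) = u * lf β v + s * lf β w := by
  unfold lf
  rw [Finset.mul_sum, Finset.mul_sum, ← Finset.sum_add_distrib]
  exact Finset.sum_congr rfl fun i _ => by simp [Pi.add_apply, Pi.smul_apply, smul_eq_mul]; ring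

/-- homogenized bilinear form on `(Fin n → ℝ) × ℝ` -/
noncomputable def hbf (α β : Fin n → ℝ) (c : ℝ) (v w : (Fin n → ℝ) × ℝ) : ℝ :=
  (∑ i, α i * v.1 i * w.1 i) + v.2 * lf β w.1 + w.2 * lf β v.1 + c * v.2 * w.2

lemma hbf_diag (α β : Fin n → ℝ) (c : ℝ) (v : (Fin n → ℝ) × ℝ) :
    hbf α β c v v = qf α v.1 + 2 * v.2 * lf β v.1 + c * v.2 ^ 2 := by
  unfold hbf qf; ring

lemma hbf_expand (α β : Fin n → ℝ) (c : ℝ) (u s : ℝ) (v w : (Fin n → ℝ) × ℝ) :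
    hbf α β c (u • v + s • w) (u • v + s • w) =
      u ^ 2 * hbf α β c v v + 2 * u * s * hbf α β c v w + s ^ 2 * hbf α β c w w := by
  have h1 : ∑ i, α i * (u • v + s • w).1 i * (u • v + s • w).1 i
      = u ^ 2 * (∑ i, α i * v.1 i * v.1 i) + 2 * u * s * (∑ i, α i * v.1 i * w.1 i)
        + s ^ 2 * (∑ i, α i * w.1 i * w.1 i) := by
    have := qf_expand α u s v.1 w.1
    unfold qf at this
    convert this using 2
    rfl
  have h2 : lf β (u • v + s • w).1 = u * lf β v.1 + s * lf β w.1 := by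
    have := lf_expand β u s v.1 w.1
    convert this using 2
    rfl
  have hfst : (u • v + s • w).2 = u * v.2 + s * w.2 := rfl
  unfold hbf
  rw [h1, h2, hfst]
  ring

set_option maxHeartbeats 1600000 in
/-- S-lemma, diagonal case: existence of the multiplier. -/
lemma slemma_diag (α β δ ε : Fin n → ℝ) (c f : ℝ)
    (hslater : ∃ w₀ : Fin n → ℝ, 0 < qf α w₀ + 2 * lf β w₀ + c)
    (himp : ∀ w : Fin n → ℝ, 0 ≤ qf α w + 2 * lf β w + c → 0 ≤ qf δ w + 2 * lf ε w + f) :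
    ∃ lam : ℝ, 0 ≤ lam ∧ ∀ w : Fin n → ℝ,
      0 ≤ (qf δ w + 2 * lf ε w + f) - lam * (qf α w + 2 * lf β w + c) := by
  obtain ⟨w₀, hw₀⟩ := hslater
  set P := hbf α β c with hPdef
  set Q := hbf δ ε f with hQdef
  set K := {p : ℝ × ℝ | ∃ v : (Fin n → ℝ) × ℝ, p = (P v v, Q v v)} with hKdef
  have hKconv : Convex ℝ K := dines P Q (hbf_expand α β c) (hbf_expand δ ε f)
  set B : Set (ℝ × ℝ) := Set.Ioi (0:ℝ) ×ˢ Set.Iio (0:ℝ) with hBdef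
  have hBconv : Convex ℝ B := (convex_Ioi 0).prod (convex_Iio 0)
  have hBopen : IsOpen B := isOpen_Ioi.prod isOpen_Iio
  -- g, h at scaled points
  have hPval : ∀ v : (Fin n → ℝ) × ℝ, P v v = qf α v.1 + 2 * v.2 * lf β v.1 + c * v.2 ^ 2 :=
    fun v => hbf_diag α β c v
  have hQval : ∀ v : (Fin n → ℝ) × ℝ, Q v v = qf δ v.1 + 2 * v.2 * lf ε v.1 + f * v.2 ^ 2 :=
    fun v => hbf_diag δ ε f v
  have hqfsc : ∀ (γ : Fin n → ℝ) (k : ℝ) (w : Fin n → ℝ), qf γ (k • w) = k ^ 2 * qf γ w := by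
    intro γ k w
    have := qf_expand γ k 0 w w
    simpa using this
  have hlfsc : ∀ (γ : Fin n → ℝ) (k : ℝ) (w : Fin n → ℝ), lf γ (k • w) = k * lf γ w := by
    intro γ k w
    have := lf_expand γ k 0 w w
    simpa using this
  -- disjointness
  have hdisj : Disjoint B K := by
    rw [Set.disjoint_left]
    rintro p ⟨hp1, hp2⟩ ⟨v, rfl⟩
    simp only [Set.mem_Ioi, Set.mem_Iio] at hp1 hp2
    by_cases hτ : v.2 = 0
    · -- homogeneous bad direction; push along Slater point
      have hqα : 0 < qf α v.1 := by
        have := hPval v; rw [hτ] at this; simpa [this] using hp1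
      have hqδ : qf δ v.1 < 0 := by
        have := hQval v; rw [hτ] at this; simpa [this] using hp2
      set X : ℝ := ∑ i, α i * v.1 i * w₀ i + lf β v.1 with hX
      set Y : ℝ := ∑ i, δ i * v.1 i * w₀ i + lf ε v.1 with hY
      set g₀ : ℝ := qf α w₀ + 2 * lf β w₀ + c with hg₀
      set h₀ : ℝ := qf δ w₀ + 2 * lf ε w₀ + f with hh₀
      set s : ℝ := max 1 (max ((2*|X| + |g₀|)/(qf α v.1)) ((2*|Y| + |h₀| + 1)/(-(qf δ v.1)))) with hs
      have hs1 : 1 ≤ s := le_max_left _ _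
      have hs2 : (2*|X| + |g₀|)/(qf α v.1) ≤ s := le_trans (le_max_left _ _) (le_max_right _ _)
      have hs3 : (2*|Y| + |h₀| + 1)/(-(qf δ v.1)) ≤ s :=
        le_trans (le_max_right _ _) (le_max_right _ _)
      have hb2 : 2*|X| + |g₀| ≤ qf α v.1 * s := by
        rw [div_le_iff₀ hqα] at hs2; linarith
      have hb3 : 2*|Y| + |h₀| + 1 ≤ (-(qf δ v.1)) * s := by
        rw [div_le_iff₀ (by linarith)] at hs3; linarith
      have hgexp : qf α (s • v.1 + (1:ℝ) • w₀) + 2 * lf β (s • v.1 + (1:ℝ) • w₀) + c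
          = s^2 * qf α v.1 + 2*s*X + g₀ := by
        rw [qf_expand, lf_expand, hX, hg₀]; ring
      have hhexp : qf δ (s • v.1 + (1:ℝ) • w₀) + 2 * lf ε (s • v.1 + (1:ℝ) • w₀) + f
          = s^2 * qf δ v.1 + 2*s*Y + h₀ := by
        rw [qf_expand, lf_expand, hY, hh₀]; ring
      have hgpos : 0 ≤ qf α (s • v.1 + (1:ℝ) • w₀) + 2 * lf β (s • v.1 + (1:ℝ) • w₀) + c := by
        rw [hgexp]
        nlinarith [abs_nonneg X, abs_nonneg g₀, le_abs_self X, neg_abs_le X, le_abs_self g₀,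
          neg_abs_le g₀]
      have hhneg := himp _ hgpos
      rw [hhexp] at hhneg
      nlinarith [abs_nonneg Y, abs_nonneg h₀, le_abs_self Y, neg_abs_le Y, le_abs_self h₀,
        neg_abs_le h₀]
    · -- dehomogenize
      have hinv : (v.2)⁻¹ * v.2 = 1 := inv_mul_cancel₀ hτ
      have hgw : qf α ((v.2)⁻¹ • v.1) + 2 * lf β ((v.2)⁻¹ • v.1) + c = (v.2)⁻¹^2 * P v v := by
        rw [hqfsc, hlfsc, hPval]
        linear_combination (-(2 * lf β v.1 * (v.2)⁻¹) - c * ((v.2)⁻¹ * v.2 + 1)) * hinv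
      have hhw : qf δ ((v.2)⁻¹ • v.1) + 2 * lf ε ((v.2)⁻¹ • v.1) + f = (v.2)⁻¹^2 * Q v v := by
        rw [hqfsc, hlfsc, hQval]
        linear_combination (-(2 * lf ε v.1 * (v.2)⁻¹) - f * ((v.2)⁻¹ * v.2 + 1)) * hinv
      have hτ2 : 0 < ((v.2)⁻¹)^2 := by
        have := inv_ne_zero hτ
        positivity
      have hg : 0 ≤ qf α ((v.2)⁻¹ • v.1) + 2 * lf β ((v.2)⁻¹ • v.1) + c := by
        rw [hgw]
        exact mul_nonneg hτ2.le hp1.le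
      have hh := himp _ hg
      rw [hhw] at hh
      nlinarith
  obtain ⟨φ, u, hBu, hKu⟩ := geometric_hahn_banach_open hBconv hBopen hKconv hdisj
  set A1 : ℝ := φ (1, 0) with hA1
  set A2 : ℝ := φ (0, 1) with hA2
  have hφeval : ∀ p : ℝ × ℝ, φ p = p.1 * A1 + p.2 * A2 := by
    intro p
    have hsplit : φ p = φ (p.1 • ((1:ℝ), (0:ℝ))) + φ (p.2 • ((0:ℝ), (1:ℝ))) := by
      rw [← _root_.map_add]
      congr 1
      simp [Prod.ext_iff]
    rw [hsplit, _root_.map_smul, _root_.map_smul, smul_eq_mul, smul_eq_mul, ← hA1, ← hA2]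
  have hu0 : u ≤ 0 := by
    have hP00 : P 0 0 = 0 := by
      rw [hPval]
      simp [qf, lf]
    have hQ00 : Q 0 0 = 0 := by
      rw [hQval]
      simp [qf, lf]
    have h0K : ((0:ℝ), (0:ℝ)) ∈ K := ⟨0, by rw [hP00, hQ00]⟩
    have h1 := hKu _ h0K
    have h2 : φ ((0:ℝ), (0:ℝ)) = 0 := by rw [hφeval]; simp
    linarith
  have hBlt : ∀ x y : ℝ, 0 < x → y < 0 → x * A1 + y * A2 < u := by
    intro x y hx hy
    have := hBu (x, y) (by exact ⟨hx, hy⟩)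
    rwa [hφeval] at this
  have hA1le : A1 ≤ 0 := by
    by_contra hc
    push_neg at hc
    have := hBlt ((|A2| + 1)/A1) (-1) (by positivity) (by norm_num)
    rw [div_mul_cancel₀ _ hc.ne'] at this
    have := le_abs_self A2
    linarith
  have hA2ge : 0 ≤ A2 := by
    by_contra hc
    push_neg at hc
    have hy : (|A1| + 1)/A2 < 0 := div_neg_of_pos_of_neg (by positivity) hc
    have := hBlt 1 ((|A1| + 1)/A2) one_pos hy
    rw [div_mul_cancel₀ _ hc.ne] at this
    have := neg_abs_le A1
    linarith
  have hKnn : ∀ v : (Fin n → ℝ) × ℝ, 0 ≤ A1 * P v v + A2 * Q v v := by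
    intro v
    by_contra hc
    push_neg at hc
    set val : ℝ := A1 * P v v + A2 * Q v v with hval
    set k : ℝ := (|u| + 1)/(-val) with hk
    have hkpos : 0 < k := by
      apply div_pos (by positivity) (by linarith)
    set v' : (Fin n → ℝ) × ℝ := Real.sqrt k • v with hv'
    have hPv' : P v' v' = k * P v v := by
      have hexp := hbf_expand α β c (Real.sqrt k) 0 v v
      have : (Real.sqrt k) • v + (0:ℝ) • v = v' := by rw [hv']; simp
      rw [this] at hexp
      rw [hPdef, hexp, Real.sq_sqrt hkpos.le]
      ring
    have hQv' : Q v' v' = k * Q v v := by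
      have hexp := hbf_expand δ ε f (Real.sqrt k) 0 v v
      have : (Real.sqrt k) • v + (0:ℝ) • v = v' := by rw [hv']; simp
      rw [this] at hexp
      rw [hQdef, hexp, Real.sq_sqrt hkpos.le]
      ring
    have hmem : (P v' v', Q v' v') ∈ K := ⟨v', rfl⟩
    have := hKu _ hmem
    rw [hφeval, hPv', hQv'] at this
    simp only at this
    have hkval : k * P v v * A1 + k * Q v v * A2 = k * val := by rw [hval]; ring
    rw [hkval] at this
    have hkneg : k * -val = |u| + 1 := by rw [hk]; exact div_mul_cancel₀ _ (by linarith)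
    have hkv : k * val = -(|u| + 1) := by linear_combination -hkneg
    rw [hkv] at this
    have hnab := neg_abs_le u
    linarith
  have hφne : A1 ≠ 0 ∨ A2 ≠ 0 := by
    by_contra hcon
    push_neg at hcon
    obtain ⟨h1, h2⟩ := hcon
    have h12 : ((1:ℝ), (-1:ℝ)) ∈ B := by exact ⟨by norm_num, by norm_num⟩
    have := hBu _ h12
    rw [hφeval] at this
    simp only [h1, h2] at this
    norm_num at this
    linarith
  have hA2pos : 0 < A2 := by
    rcases lt_or_eq_of_le hA2ge with h | h
    · exact h
    · exfalso
      have hA1ne : A1 ≠ 0 := by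
        rcases hφne with h' | h'
        · exact h'
        · exact absurd h.symm h'
      have hA1neg : A1 < 0 := lt_of_le_of_ne hA1le hA1ne
      have := hKnn (w₀, 1)
      rw [← h, zero_mul, add_zero] at this
      have hPw₀ : P (w₀, 1) (w₀, 1) = qf α w₀ + 2 * lf β w₀ + c := by
        rw [hPval]; simp
      rw [hPw₀] at this
      nlinarith
  refine ⟨-A1/A2, div_nonneg (by linarith) hA2pos.le, ?_⟩
  intro w
  have hthis := hKnn (w, 1)
  have hPw : P (w, 1) (w, 1) = qf α w + 2 * lf β w + c := by rw [hPval]; simp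
  have hQw : Q (w, 1) (w, 1) = qf δ w + 2 * lf ε w + f := by rw [hQval]; simp
  rw [hPw, hQw] at hthis
  have step : (-A1/A2) * (qf α w + 2 * lf β w + c) ≤ qf δ w + 2 * lf ε w + f := by
    rw [div_mul_eq_mul_div, div_le_iff₀ hA2pos]
    nlinarith [hthis]
  rw [sub_nonneg]
  exact step


lemma qf_single (a : Fin n → ℝ) (i : Fin n) (x : ℝ) :
    qf a (Pi.single i x) = a i * x * x := by
  unfold qf
  rw [Finset.sum_eq_single i]
  · rw [Pi.single_eq_same]
  · intro j _ hj
    simp [Pi.single_eq_of_ne hj]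
  · intro h
    exact absurd (Finset.mem_univ i) h

lemma lf_single (a : Fin n → ℝ) (i : Fin n) (x : ℝ) :
    lf a (Pi.single i x) = a i * x := by
  unfold lf
  rw [Finset.sum_eq_single i]
  · rw [Pi.single_eq_same]
  · intro j _ hj
    simp [Pi.single_eq_of_ne hj]
  · intro h
    exact absurd (Finset.mem_univ i) h

/-- split a quadratic with shifted coefficients -/
lemma qf_shift (δ α : Fin n → ℝ) (lam : ℝ) (w : Fin n → ℝ) :
    qf (fun i => δ i - lam * α i) w = qf δ w - lam * qf α w := by
  unfold qf
  rw [Finset.mul_sum, ← Finset.sum_sub_distrib]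
  exact Finset.sum_congr rfl fun i _ => by ring

lemma lf_shift (ε β : Fin n → ℝ) (lam : ℝ) (w : Fin n → ℝ) :
    lf (fun i => ε i - lam * β i) w = lf ε w - lam * lf β w := by
  unfold lf
  rw [Finset.mul_sum, ← Finset.sum_sub_distrib]
  exact Finset.sum_congr rfl fun i _ => by ring

/-- Forward direction, diagonal case. -/
lemma slemma_diag_fwd (α β δ ε : Fin n → ℝ) (c f : ℝ)
    (hslater : ∃ w₀ : Fin n → ℝ, 0 < qf α w₀ + 2 * lf β w₀ + c)
    (himp : ∀ w : Fin n → ℝ, 0 ≤ qf α w + 2 * lf β w + c → 0 ≤ qf δ w + 2 * lf ε w + f) :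
    ∃ (lam : ℝ) (t : Fin n → ℝ), 0 ≤ lam ∧ (∑ i, t i) ≤ f - lam * c ∧
      ∀ i : Fin n, (ε i - lam * β i, t i, δ i - lam * α i) ∈ socQ := by
  obtain ⟨lam, hlam, hφ⟩ := slemma_diag α β δ ε c f hslater himp
  set a : Fin n → ℝ := fun i => δ i - lam * α i with ha
  set uu : Fin n → ℝ := fun i => ε i - lam * β i with huu
  set γ : ℝ := f - lam * c with hγ
  have hφ' : ∀ w : Fin n → ℝ, 0 ≤ qf a w + 2 * lf uu w + γ := by
    intro w
    have := hφ w
    rw [ha, huu, hγ, qf_shift, lf_shift]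
    linarith
  have hannz : ∀ i, 0 ≤ a i := by
    intro i
    apply quad_lead_nonneg (b := 2 * uu i) (c := γ)
    intro x
    have := hφ' (Pi.single i x)
    rw [qf_single, lf_single] at this
    nlinarith
  have hz : ∀ i, a i = 0 → uu i = 0 := by
    intro i hi
    have h2 : (2 : ℝ) * uu i = 0 := by
      apply lin_nonneg_zero (c := γ)
      intro x
      have := hφ' (Pi.single i x)
      rw [qf_single, lf_single, hi] at this
      linarith
    linarith
  classical
  set t : Fin n → ℝ := fun i => if a i = 0 then 0 else uu i ^ 2 / a i with ht
  have hsum : (∑ i, t i) ≤ γ := by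
    set wmin : Fin n → ℝ := fun i => if a i = 0 then 0 else -(uu i) / a i with hwmin
    have hkey : qf a wmin + 2 * lf uu wmin = ∑ i, -(t i) := by
      unfold qf lf
      rw [Finset.mul_sum, ← Finset.sum_add_distrib]
      refine Finset.sum_congr rfl fun i _ => ?_
      by_cases hi : a i = 0
      · simp [hwmin, ht, hi, hz i hi]
      · rw [ht, hwmin]
        simp only [if_neg hi]
        field_simp
        ring
    have := hφ' wmin
    rw [hkey] at this
    rw [Finset.sum_neg_distrib] at this
    linarith
  refine ⟨lam, t, hlam, by rw [← hγ]; exact hsum, ?_⟩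
  intro i
  rw [mem_socQ]
  by_cases hi : a i = 0
  · refine ⟨by rw [ht]; simp [hi], ?_, ?_⟩
    · rw [show δ i - lam * α i = a i from rfl, hi]
    · rw [show ε i - lam * β i = uu i from rfl, hz i hi,
        show δ i - lam * α i = a i from rfl, hi]
      norm_num
  · have hipos : 0 < a i := lt_of_le_of_ne (hannz i) (Ne.symm hi)
    refine ⟨?_, hannz i, ?_⟩
    · rw [ht]
      simp only [if_neg hi]
      positivity
    · rw [show ε i - lam * β i = uu i from rfl, show δ i - lam * α i = a i from rfl, ht]
      simp only [if_neg hi]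
      rw [div_mul_cancel₀ _ hi]

/-- Backward direction, diagonal case. -/
lemma slemma_diag_bwd (α β δ ε : Fin n → ℝ) (c f : ℝ)
    (lam : ℝ) (t : Fin n → ℝ) (hlam : 0 ≤ lam) (hsum : (∑ i, t i) ≤ f - lam * c)
    (hmem : ∀ i : Fin n, (ε i - lam * β i, t i, δ i - lam * α i) ∈ socQ)
    (w : Fin n → ℝ) (hg : 0 ≤ qf α w + 2 * lf β w + c) :
    0 ≤ qf δ w + 2 * lf ε w + f := by
  have hterm : ∀ i : Fin n, 0 ≤ (δ i - lam * α i) * w i * w i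
      + 2 * ((ε i - lam * β i) * w i) + t i := by
    intro i
    obtain ⟨hti, hai, hsq⟩ := mem_socQ.1 (hmem i)
    rcases eq_or_lt_of_le hai with h0 | h0
    · have hu : ε i - lam * β i = 0 := by nlinarith
      rw [hu, ← h0]
      simpa using hti
    · nlinarith [sq_nonneg ((δ i - lam * α i) * w i + (ε i - lam * β i))]
  have hsum2 : 0 ≤ (qf δ w - lam * qf α w) + 2 * (lf ε w - lam * lf β w) + ∑ i, t i := by
    rw [← qf_shift δ α lam w, ← lf_shift ε β lam w]
    have : qf (fun i => δ i - lam * α i) w + 2 * lf (fun i => ε i - lam * β i) w + ∑ i, t i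
        = ∑ i, ((δ i - lam * α i) * w i * w i + 2 * ((ε i - lam * β i) * w i) + t i) := by
      unfold qf lf
      rw [Finset.sum_add_distrib, Finset.sum_add_distrib, Finset.mul_sum]
    rw [this]
    exact Finset.sum_nonneg fun i _ => hterm i
  nlinarith [mul_nonneg hlam hg]


end diag

theorem simplified_S_lemma {n : ℕ}
    (A D : Matrix (Fin n) (Fin n) ℝ) (hA : A.IsSymm) (hD : D.IsSymm)
    (b e : Fin n → ℝ) (c f : ℝ)
    (hslater : ∃ z₀ : Fin n → ℝ, 0 < z₀ ⬝ᵥ A.mulVec z₀ + 2 * (b ⬝ᵥ z₀) + c)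
    (S : Matrix (Fin n) (Fin n) ℝ) (hS : IsUnit S)
    (α δ : Fin n → ℝ)
    (hSA : Sᵀ * A * S = Matrix.diagonal α)
    (hSD : Sᵀ * D * S = Matrix.diagonal δ) :
    (∀ z : Fin n → ℝ, 0 ≤ z ⬝ᵥ A.mulVec z + 2 * (b ⬝ᵥ z) + c →
        0 ≤ z ⬝ᵥ D.mulVec z + 2 * (e ⬝ᵥ z) + f) ↔
      ∃ (lam : ℝ) (t : Fin n → ℝ), 0 ≤ lam ∧ (∑ i, t i) ≤ f - lam * c ∧
        ∀ i : Fin n,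
          ((Sᵀ.mulVec e) i - lam * (Sᵀ.mulVec b) i, t i, δ i - lam * α i) ∈ socQ := by
  have hdet : IsUnit S.det := (Matrix.isUnit_iff_isUnit_det S).1 hS
  have hSS : S * S⁻¹ = 1 := Matrix.mul_nonsing_inv S hdet
  have hinv : ∀ z : Fin n → ℝ, S.mulVec (S⁻¹.mulVec z) = z := by
    intro z
    rw [Matrix.mulVec_mulVec, hSS, Matrix.one_mulVec]
  -- quadratic form identity
  have hq : ∀ (M : Matrix (Fin n) (Fin n) ℝ) (μ : Fin n → ℝ), M.IsSymm →
      (Sᵀ * M * S = Matrix.diagonal μ) →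
      ∀ w : Fin n → ℝ, (S.mulVec w) ⬝ᵥ M.mulVec (S.mulVec w) = qf μ w := by
    intro M μ hM hdiag w
    rw [Matrix.mulVec_mulVec, Matrix.dotProduct_mulVec]
    have h1 : Matrix.vecMul (S.mulVec w) (M * S) = ((M * S)ᵀ * S).mulVec w := by
      rw [← Matrix.mulVec_mulVec, Matrix.mulVec_transpose]
    rw [h1]
    have h2 : (M * S)ᵀ * S = Sᵀ * M * S := by
      rw [Matrix.transpose_mul, hM.eq]
    rw [h2, hdiag]
    unfold qf dotProduct
    exact Finset.sum_congr rfl fun i _ => by rw [Matrix.mulVec_diagonal]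
  -- linear form identity
  have hl : ∀ (v : Fin n → ℝ) (w : Fin n → ℝ),
      v ⬝ᵥ (S.mulVec w) = lf (Sᵀ.mulVec v) w := by
    intro v w
    rw [Matrix.dotProduct_mulVec, ← Matrix.mulVec_transpose]
    rfl
  have hgA : ∀ w, (S.mulVec w) ⬝ᵥ A.mulVec (S.mulVec w) + 2 * (b ⬝ᵥ (S.mulVec w)) + c
      = qf α w + 2 * lf (Sᵀ.mulVec b) w + c := by
    intro w; rw [hq A α hA hSA, hl]
  have hgD : ∀ w, (S.mulVec w) ⬝ᵥ D.mulVec (S.mulVec w) + 2 * (e ⬝ᵥ (S.mulVec w)) + f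
      = qf δ w + 2 * lf (Sᵀ.mulVec e) w + f := by
    intro w; rw [hq D δ hD hSD, hl]
  constructor
  · intro himp
    apply slemma_diag_fwd α (Sᵀ.mulVec b) δ (Sᵀ.mulVec e) c f
    · obtain ⟨z₀, hz₀⟩ := hslater
      refine ⟨S⁻¹.mulVec z₀, ?_⟩
      rw [← hgA, hinv]
      exact hz₀
    · intro w hg
      rw [← hgD]
      apply himp
      rw [hgA]
      exact hg
  · rintro ⟨lam, t, hlam, hsum, hmem⟩ z hg
    have hz : z = S.mulVec (S⁻¹.mulVec z) := (hinv z).symm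
    rw [hz, hgD]
    apply slemma_diag_bwd α (Sᵀ.mulVec b) δ (Sᵀ.mulVec e) c f lam t hlam hsum hmem
    rw [← hgA, ← hz]
    exact hg
end

section
/- Let γ > 0, let C ∈ ℝ^{N×N} be symmetric, let q ∈ ℝᴺ and φ ∈ ℝ, and suppose S ∈ ℝ^{N×N} is invertible with SᵀS = diag(σ₁, …, σ_N) and SᵀCS = diag(τ₁, …, τ_N). Then the robust constraint (for all w ∈ ℝᴺ with ‖w‖₂ ≤ γ: wᵀCw + 2qᵀw ≤ φ) holds if and only if there exist λ ≥ 0 and t ∈ ℝᴺ such that Σᵢ tᵢ + γ²λ ≤ φ and ((Sᵀq)ᵢ, tᵢ, λσᵢ − τᵢ) ∈ Q for every i ∈ {1, …, N}. -/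
open Matrix

section aux
open Finset

lemma socQ_mem_iff (x y z : ℝ) :
    (x, y, z) ∈ socQ ↔ 0 ≤ y ∧ 0 ≤ z ∧ x ^ 2 ≤ y * z := by
  unfold socQ
  simp only [Set.mem_setOf_eq]
  constructor
  · intro h
    have h0 : 0 ≤ y + z := le_trans (Real.sqrt_nonneg _) h
    have h1 : 4 * x ^ 2 + (y - z) ^ 2 ≤ (y + z) ^ 2 := by
      rw [← Real.sqrt_le_left h0] at *
      · exact h
    have hyz : x ^ 2 ≤ y * z := by nlinarith
    have hy : 0 ≤ y := by nlinarith [sq_nonneg x]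
    have hz : 0 ≤ z := by nlinarith [sq_nonneg x]
    exact ⟨hy, hz, hyz⟩
  · rintro ⟨hy, hz, hx⟩
    rw [Real.sqrt_le_left (by linarith)]
    nlinarith

lemma coord_facts (lam s c rr : ℝ) (hd : 0 ≤ lam * s - c)
    (h0 : lam * s - c = 0 → rr = 0) :
    c * (rr / (lam * s - c)) ^ 2 + 2 * rr * (rr / (lam * s - c))
        = rr ^ 2 / (lam * s - c) + lam * (s * (rr / (lam * s - c)) ^ 2)
    ∧ s * (rr / (lam * s - c)) ^ 2 = rr ^ 2 * s / (lam * s - c) ^ 2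
    ∧ 0 ≤ rr ^ 2 / (lam * s - c)
    ∧ rr ^ 2 ≤ (rr ^ 2 / (lam * s - c)) * (lam * s - c) := by
  rcases eq_or_lt_of_le hd with h | h
  · have hr : rr = 0 := h0 h.symm
    simp [hr]
  · have hne : lam * s - c ≠ 0 := ne_of_gt h
    refine ⟨by field_simp; ring, by field_simp, div_nonneg (sq_nonneg _) h.le, ?_⟩
    rw [div_mul_cancel₀ _ hne]

lemma core_easy {N : ℕ} (γ : ℝ) (hγ : 0 < γ) (σ τ r : Fin N → ℝ)
    (φ : ℝ) (lam : ℝ) (t : Fin N → ℝ) (hlam : 0 ≤ lam)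
    (hsum : (∑ i, t i) + γ ^ 2 * lam ≤ φ)
    (hQ : ∀ i, 0 ≤ t i ∧ 0 ≤ lam * σ i - τ i ∧ r i ^ 2 ≤ t i * (lam * σ i - τ i)) :
    ∀ v : Fin N → ℝ, (∑ i, σ i * v i ^ 2) ≤ γ ^ 2 →
      (∑ i, (τ i * v i ^ 2 + 2 * r i * v i)) ≤ φ := by
  intro v hv
  have key : ∀ i, τ i * v i ^ 2 + 2 * r i * v i ≤ t i + lam * (σ i * v i ^ 2) := by
    intro i
    obtain ⟨ht, hd, hr⟩ := hQ i
    set d := lam * σ i - τ i with hdd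
    have main : 0 ≤ t i + d * v i ^ 2 - 2 * r i * v i := by
      rcases eq_or_lt_of_le hd with h0 | h0
      · have hr0 : r i = 0 := by nlinarith [sq_nonneg (r i)]
        rw [hr0, ← h0]; nlinarith
      · nlinarith [sq_nonneg (d * v i - r i), mul_pos h0 h0]
    have expand : τ i * v i ^ 2 + 2 * r i * v i
        = t i + lam * (σ i * v i ^ 2) - (t i + d * v i ^ 2 - 2 * r i * v i) := by
      rw [hdd]; ring
    linarith
  calc (∑ i, (τ i * v i ^ 2 + 2 * r i * v i))
      ≤ ∑ i, (t i + lam * (σ i * v i ^ 2)) := Finset.sum_le_sum fun i _ => key i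
    _ = (∑ i, t i) + lam * (∑ i, σ i * v i ^ 2) := by rw [Finset.sum_add_distrib, Finset.mul_sum]
    _ ≤ (∑ i, t i) + lam * γ ^ 2 := by nlinarith [mul_le_mul_of_nonneg_left hv hlam]
    _ ≤ φ := by nlinarith
set_option maxHeartbeats 1600000 in
lemma core_hard {N : ℕ} (γ : ℝ) (hγ : 0 < γ) (σ τ r : Fin N → ℝ) (hσ : ∀ i, 0 < σ i) (φ : ℝ)
    (H : ∀ v : Fin N → ℝ, (∑ i, σ i * v i ^ 2) ≤ γ ^ 2 →
      (∑ i, (τ i * v i ^ 2 + 2 * r i * v i)) ≤ φ) :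
    ∃ (lam : ℝ) (t : Fin N → ℝ), 0 ≤ lam ∧ (∑ i, t i) + γ ^ 2 * lam ≤ φ ∧
      ∀ i, 0 ≤ t i ∧ 0 ≤ lam * σ i - τ i ∧ r i ^ 2 ≤ t i * (lam * σ i - τ i) := by
  rcases Nat.eq_zero_or_pos N with hN | hN
  · subst hN
    refine ⟨0, 0, le_refl _, ?_, fun i => i.elim0⟩
    have h0 := H 0 (by simp; positivity)
    simpa using h0
  haveI : Nonempty (Fin N) := ⟨⟨0, hN⟩⟩
  obtain ⟨j, -, hj⟩ := Finset.exists_max_image Finset.univ (fun i => τ i / σ i) univ_nonempty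
  set lam0 : ℝ := max 0 (τ j / σ j) with hlam0def
  have hlam0 : 0 ≤ lam0 := le_max_left _ _
  have hτle : ∀ i, τ i ≤ lam0 * σ i := by
    intro i
    have h1 : τ i / σ i ≤ lam0 := le_trans (hj i (mem_univ i)) (le_max_right _ _)
    have h2 := mul_le_mul_of_nonneg_right h1 (hσ i).le
    rwa [div_mul_cancel₀ _ (hσ i).ne'] at h2
  have hdpos : ∀ (l : ℝ), lam0 < l → ∀ i, 0 < l * σ i - τ i := by
    intro l hl i
    nlinarith [hτle i, mul_pos (sub_pos.mpr hl) (hσ i)]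
  set G : ℝ → ℝ := fun l => ∑ i, r i ^ 2 * σ i / (l * σ i - τ i) ^ 2 with hGdef
  have key : ∀ lam : ℝ, 0 ≤ lam → (∀ i, 0 ≤ lam * σ i - τ i) →
      (∀ i, lam * σ i - τ i = 0 → r i = 0) → G lam ≤ γ ^ 2 →
      ((∑ i, r i ^ 2 / (lam * σ i - τ i)) + lam * G lam ≤ φ) := by
    intro lam hlamnn hd0 hr0 hGle
    set v : Fin N → ℝ := fun i => r i / (lam * σ i - τ i) with hvdef
    have hvG : (∑ i, σ i * v i ^ 2) = G lam :=
      Finset.sum_congr rfl fun i _ => (coord_facts lam (σ i) (τ i) (r i) (hd0 i) (hr0 i)).2.1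
    have hid : (∑ i, (τ i * v i ^ 2 + 2 * r i * v i))
        = (∑ i, r i ^ 2 / (lam * σ i - τ i)) + lam * (∑ i, σ i * v i ^ 2) := by
      rw [Finset.mul_sum, ← Finset.sum_add_distrib]
      exact Finset.sum_congr rfl fun i _ =>
        (coord_facts lam (σ i) (τ i) (r i) (hd0 i) (hr0 i)).1
    have hH := H v (by rw [hvG]; exact hGle)
    rw [hid, hvG] at hH
    exact hH
  by_cases hA : ∃ μ, lam0 < μ ∧ γ ^ 2 < G μ
  · -- Case A : IVT gives lam with G lam = γ²
    obtain ⟨μ, hμ, hGμ⟩ := hA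
    set K : ℝ := ∑ i, r i ^ 2 / σ i with hKdef
    have hK : 0 ≤ K := Finset.sum_nonneg fun i _ => div_nonneg (sq_nonneg _) (hσ i).le
    set a : ℝ := Real.sqrt K with hadef
    have ha : 0 ≤ a := Real.sqrt_nonneg _
    have ha2 : a ^ 2 = K := Real.sq_sqrt hK
    set lam1 : ℝ := max (μ + 1) (lam0 + a / γ + 1) with hlam1def
    have hμ1 : μ ≤ lam1 := le_trans (by linarith) (le_max_left _ _)
    have hmr : lam0 + a / γ + 1 ≤ lam1 := le_max_right _ _
    have hag : 0 ≤ a / γ := div_nonneg ha hγ.le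
    have hlam1gt : lam0 < lam1 := by linarith
    have hc : a / γ + 1 ≤ lam1 - lam0 := by linarith
    have hG1 : G lam1 ≤ γ ^ 2 := by
      have hterm : ∀ i ∈ Finset.univ, r i ^ 2 * σ i / (lam1 * σ i - τ i) ^ 2
          ≤ (r i ^ 2 / σ i) / (lam1 - lam0) ^ 2 := by
        intro i _
        have hσne : σ i ≠ 0 := (hσ i).ne'
        have hsub : 0 < lam1 - lam0 := sub_pos.mpr hlam1gt
        have hsubne : lam1 - lam0 ≠ 0 := hsub.ne'
        have hlow : σ i * (lam1 - lam0) ≤ lam1 * σ i - τ i := by nlinarith [hτle i]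
        have hlowpos : 0 < σ i * (lam1 - lam0) := mul_pos (hσ i) hsub
        have hsq : (σ i * (lam1 - lam0)) ^ 2 ≤ (lam1 * σ i - τ i) ^ 2 := by nlinarith
        calc r i ^ 2 * σ i / (lam1 * σ i - τ i) ^ 2
            ≤ r i ^ 2 * σ i / (σ i * (lam1 - lam0)) ^ 2 :=
              div_le_div_of_nonneg_left (mul_nonneg (sq_nonneg _) (hσ i).le)
                (pow_pos hlowpos 2) hsq
          _ = (r i ^ 2 / σ i) / (lam1 - lam0) ^ 2 := by
              field_simp
      have hsum := Finset.sum_le_sum hterm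
      have hKc : (∑ i, (r i ^ 2 / σ i) / (lam1 - lam0) ^ 2) = K / (lam1 - lam0) ^ 2 := by
        rw [hKdef, Finset.sum_div]
      have hfinal : K / (lam1 - lam0) ^ 2 ≤ γ ^ 2 := by
        have hgc : a + γ ≤ γ * (lam1 - lam0) := by
          have h6 := mul_le_mul_of_nonneg_left hc hγ.le
          have hfix : γ * (a / γ) = a := by field_simp
          nlinarith [h6]
        have hsub : 0 < lam1 - lam0 := sub_pos.mpr hlam1gt
        rw [div_le_iff₀ (by positivity)]
        nlinarith
      calc G lam1 ≤ ∑ i, (r i ^ 2 / σ i) / (lam1 - lam0) ^ 2 := hsum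
        _ = K / (lam1 - lam0) ^ 2 := hKc
        _ ≤ γ ^ 2 := hfinal
    have hcont : ContinuousOn G (Set.Icc μ lam1) := by
      rw [hGdef]
      apply continuousOn_finset_sum
      intro i _
      apply ContinuousOn.div continuousOn_const
      · fun_prop
      · intro l hl
        exact ne_of_gt (pow_pos (hdpos l (lt_of_lt_of_le hμ hl.1) i) 2)
    obtain ⟨lam, hlamIcc, hGlam⟩ := intermediate_value_Icc' hμ1 hcont ⟨hG1, hGμ.le⟩
    have hlamgt : lam0 < lam := lt_of_lt_of_le hμ hlamIcc.1
    have hd0 : ∀ i, 0 ≤ lam * σ i - τ i := fun i => (hdpos lam hlamgt i).le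
    have hr0 : ∀ i, lam * σ i - τ i = 0 → r i = 0 :=
      fun i h => absurd h (ne_of_gt (hdpos lam hlamgt i))
    have hB1 := key lam (le_trans hlam0 hlamgt.le) hd0 hr0 hGlam.le
    rw [hGlam] at hB1
    refine ⟨lam, fun i => r i ^ 2 / (lam * σ i - τ i), le_trans hlam0 hlamgt.le,
      by linarith, fun i => ?_⟩
    obtain ⟨-, -, h3, h4⟩ := coord_facts lam (σ i) (τ i) (r i) (hd0 i) (hr0 i)
    exact ⟨h3, hd0 i, h4⟩
  · -- Case B
    push_neg at hA
    have hd0 : ∀ i, 0 ≤ lam0 * σ i - τ i := fun i => sub_nonneg.mpr (hτle i)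
    have hr0 : ∀ i, lam0 * σ i - τ i = 0 → r i = 0 := by
      intro i hi
      by_contra hri
      have hrsq : 0 < r i ^ 2 := by positivity
      have hσγ : 0 < σ i * γ ^ 2 := mul_pos (hσ i) (pow_pos hγ 2)
      have hq : 0 < r i ^ 2 / (σ i * γ ^ 2) := div_pos hrsq hσγ
      set ε : ℝ := Real.sqrt (r i ^ 2 / (σ i * γ ^ 2)) / 2 with hεdef
      have hε : 0 < ε := by
        have := Real.sqrt_pos.mpr hq
        rw [hεdef]; linarith
      have hε2 : ε ^ 2 = r i ^ 2 / (σ i * γ ^ 2) / 4 := by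
        rw [hεdef, div_pow, Real.sq_sqrt hq.le]
        norm_num
      set μ := lam0 + ε with hμdef
      have hμ : lam0 < μ := lt_add_of_pos_right _ hε
      have hdμ : μ * σ i - τ i = ε * σ i := by
        rw [hμdef]; linear_combination hi
      have hterm : γ ^ 2 < r i ^ 2 * σ i / (μ * σ i - τ i) ^ 2 := by
        rw [hdμ, lt_div_iff₀ (pow_pos (mul_pos hε (hσ i)) 2)]
        have hσne : σ i ≠ 0 := (hσ i).ne'
        have hγne : γ ≠ 0 := hγ.ne'
        have h5 : γ ^ 2 * (ε * σ i) ^ 2 = r i ^ 2 / 4 * σ i := by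
          rw [mul_pow, hε2]; field_simp
        rw [h5]
        nlinarith [mul_pos hrsq (hσ i)]
      have hle : r i ^ 2 * σ i / (μ * σ i - τ i) ^ 2 ≤ G μ := by
        rw [hGdef]
        exact Finset.single_le_sum (f := fun k => r k ^ 2 * σ k / (μ * σ k - τ k) ^ 2)
          (fun k _ => div_nonneg (mul_nonneg (sq_nonneg _) (hσ k).le) (sq_nonneg _))
          (mem_univ i)
      linarith [hA μ hμ]
    have hG0 : G lam0 ≤ γ ^ 2 := by
      by_contra hlt
      push_neg at hlt
      have hcontj : ∀ i : Fin N,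
          ContinuousAt (fun l : ℝ => r i ^ 2 * σ i / (l * σ i - τ i) ^ 2) lam0 := by
        intro i
        rcases eq_or_lt_of_le (hd0 i) with h | h
        · have hri : r i = 0 := hr0 i h.symm
          have heq : (fun l : ℝ => r i ^ 2 * σ i / (l * σ i - τ i) ^ 2)
              = fun _ : ℝ => (0 : ℝ) := by
            funext l; rw [hri]; simp
          rw [heq]; exact continuousAt_const
        · exact ContinuousAt.div continuousAt_const
            (((continuous_mul_right (σ i)).sub continuous_const).pow 2).continuousAt
            (ne_of_gt (pow_pos h 2))
      have hcont : ContinuousAt G lam0 := by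
        rw [hGdef]
        exact tendsto_finset_sum _ fun i _ => hcontj i
      have hev : ∀ᶠ l in nhds lam0, γ ^ 2 < G l := hcont.eventually (eventually_gt_nhds hlt)
      haveI := nhdsGT_neBot lam0
      have hev2 : ∀ᶠ l in nhdsWithin lam0 (Set.Ioi lam0), γ ^ 2 < G l ∧ l ∈ Set.Ioi lam0 :=
        (hev.filter_mono nhdsWithin_le_nhds).and eventually_mem_nhdsWithin
      obtain ⟨μ, hμ1, hμ2⟩ := hev2.exists
      exact absurd (hA μ hμ2) (not_le.mpr hμ1)
    have hB1 := key lam0 hlam0 hd0 hr0 hG0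
    have hQ : ∀ i, 0 ≤ r i ^ 2 / (lam0 * σ i - τ i) ∧ 0 ≤ lam0 * σ i - τ i ∧
        r i ^ 2 ≤ (r i ^ 2 / (lam0 * σ i - τ i)) * (lam0 * σ i - τ i) := by
      intro i
      obtain ⟨-, -, h3, h4⟩ := coord_facts lam0 (σ i) (τ i) (r i) (hd0 i) (hr0 i)
      exact ⟨h3, hd0 i, h4⟩
    rcases eq_or_lt_of_le hlam0 with h0 | h0
    · refine ⟨lam0, fun i => r i ^ 2 / (lam0 * σ i - τ i), hlam0, ?_, hQ⟩
      have h00 : γ ^ 2 * lam0 = lam0 * G lam0 := by rw [← h0]; ring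
      linarith
    · -- lam0 > 0 : pad with coordinate j
      have hratio : lam0 = τ j / σ j := by
        rcases max_cases 0 (τ j / σ j) with ⟨h1, h2⟩ | ⟨h1, h2⟩
        · rw [hlam0def] at h0 ⊢; rw [h1] at h0; linarith
        · rw [hlam0def, h1]
      have hdj : lam0 * σ j - τ j = 0 := by
        rw [hratio, div_mul_cancel₀ _ (hσ j).ne']; ring
      have hrj : r j = 0 := hr0 j hdj
      set v : Fin N → ℝ := fun i => r i / (lam0 * σ i - τ i) with hvdef
      have hvj : v j = 0 := by rw [hvdef]; simp [hrj]
      set s : ℝ := Real.sqrt ((γ ^ 2 - G lam0) / σ j) with hsdef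
      have hs2 : s ^ 2 = (γ ^ 2 - G lam0) / σ j :=
        Real.sq_sqrt (div_nonneg (by linarith) (hσ j).le)
      set v' : Fin N → ℝ := fun i => if i = j then s else v i with hv'def
      have hv'j : v' j = s := by rw [hv'def]; simp
      have hvG : (∑ i, σ i * v i ^ 2) = G lam0 :=
        Finset.sum_congr rfl fun i _ => (coord_facts lam0 (σ i) (τ i) (r i) (hd0 i) (hr0 i)).2.1
      have hid : (∑ i, (τ i * v i ^ 2 + 2 * r i * v i))
          = (∑ i, r i ^ 2 / (lam0 * σ i - τ i)) + lam0 * (∑ i, σ i * v i ^ 2) := by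
        rw [Finset.mul_sum, ← Finset.sum_add_distrib]
        exact Finset.sum_congr rfl fun i _ =>
          (coord_facts lam0 (σ i) (τ i) (r i) (hd0 i) (hr0 i)).1
      have hσs : σ j * s ^ 2 = γ ^ 2 - G lam0 := by
        rw [hs2, mul_div_cancel₀ _ (hσ j).ne']
      have hsum1 : (∑ i, σ i * v' i ^ 2) = G lam0 + σ j * s ^ 2 := by
        rw [← Finset.sum_erase_add _ _ (mem_univ j)]
        have e1 : ∀ i ∈ Finset.univ.erase j, σ i * v' i ^ 2 = σ i * v i ^ 2 := by
          intro i hi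
          rw [hv'def]
          simp [Finset.ne_of_mem_erase hi]
        rw [Finset.sum_congr rfl e1,
          Finset.sum_erase _ (f := fun i => σ i * v i ^ 2)
            (by show σ j * v j ^ 2 = 0; rw [hvj]; ring), hvG, hv'j]
      have hfeas : (∑ i, σ i * v' i ^ 2) ≤ γ ^ 2 := by
        rw [hsum1, hσs]; linarith
      have hτj : τ j = lam0 * σ j := by linarith [hdj]
      have hsum2 : (∑ i, (τ i * v' i ^ 2 + 2 * r i * v' i))
          = (∑ i, r i ^ 2 / (lam0 * σ i - τ i)) + lam0 * γ ^ 2 := by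
        rw [← Finset.sum_erase_add _ _ (mem_univ j)]
        have e1 : ∀ i ∈ Finset.univ.erase j,
            τ i * v' i ^ 2 + 2 * r i * v' i = τ i * v i ^ 2 + 2 * r i * v i := by
          intro i hi
          rw [hv'def]
          simp [Finset.ne_of_mem_erase hi]
        rw [Finset.sum_congr rfl e1,
          Finset.sum_erase _ (f := fun i => τ i * v i ^ 2 + 2 * r i * v i)
            (by show τ j * v j ^ 2 + 2 * r j * v j = 0; rw [hvj, hrj]; ring),
          hid, hvG, hv'j, hrj, hτj]
        have : lam0 * σ j * s ^ 2 = lam0 * (γ ^ 2 - G lam0) := by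
          rw [mul_assoc, hσs]
        linarith [this]
      have hfin := H v' hfeas
      rw [hsum2] at hfin
      refine ⟨lam0, fun i => r i ^ 2 / (lam0 * σ i - τ i), hlam0, by linarith, hQ⟩

lemma quad_form_diag {N : ℕ} (S M : Matrix (Fin N) (Fin N) ℝ) (d : Fin N → ℝ)
    (hM : Mᵀ = M) (hMd : Sᵀ * M * S = Matrix.diagonal d) (v : Fin N → ℝ) :
    (S *ᵥ v) ⬝ᵥ (M *ᵥ (S *ᵥ v)) = ∑ i, d i * v i ^ 2 := by
  calc (S *ᵥ v) ⬝ᵥ (M *ᵥ (S *ᵥ v))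
      = (S *ᵥ v) ⬝ᵥ ((M * S) *ᵥ v) := by rw [Matrix.mulVec_mulVec]
    _ = ((S *ᵥ v) ᵥ* (M * S)) ⬝ᵥ v := dotProduct_mulVec _ _ _
    _ = (((M * S)ᵀ * S) *ᵥ v) ⬝ᵥ v := by
        rw [← Matrix.mulVec_transpose, Matrix.mulVec_mulVec]
    _ = ((Matrix.diagonal d) *ᵥ v) ⬝ᵥ v := by
        rw [Matrix.transpose_mul, hM, hMd]
    _ = ∑ i, d i * v i ^ 2 := by
        simp only [dotProduct, Matrix.mulVec_diagonal]
        exact Finset.sum_congr rfl fun i _ => by ring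

lemma sigma_pos {N : ℕ} (S : Matrix (Fin N) (Fin N) ℝ) (hS : IsUnit S) (σ : Fin N → ℝ)
    (hSS : Sᵀ * S = Matrix.diagonal σ) (i : Fin N) : 0 < σ i := by
  have hdet : IsUnit S.det := (Matrix.isUnit_iff_isUnit_det S).mp hS
  have hinv : S⁻¹ * S = 1 := Matrix.nonsing_inv_mul S hdet
  have h1 : σ i = ∑ k, S k i ^ 2 := by
    have h := congrFun (congrFun hSS i) i
    rw [Matrix.diagonal_apply_eq] at h
    rw [← h, Matrix.mul_apply]
    exact Finset.sum_congr rfl fun k _ => by rw [Matrix.transpose_apply, sq]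
  have h2 : 0 ≤ ∑ k, S k i ^ 2 := Finset.sum_nonneg fun k _ => sq_nonneg _
  rcases eq_or_lt_of_le h2 with h3 | h3
  · exfalso
    have hz : ∀ k, S k i = 0 := by
      intro k
      have := (Finset.sum_eq_zero_iff_of_nonneg (fun k _ => sq_nonneg (S k i))).mp h3.symm
      exact pow_eq_zero_iff (n := 2) (by norm_num) |>.mp (this k (mem_univ k))
    have hone : (1 : Matrix (Fin N) (Fin N) ℝ) i i = 1 := Matrix.one_apply_eq i
    rw [← hinv, Matrix.mul_apply] at hone
    have : (∑ k, S⁻¹ i k * S k i) = 0 :=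
      Finset.sum_eq_zero fun k _ => by rw [hz k, mul_zero]
    rw [this] at hone
    exact zero_ne_one hone
  · rw [h1]; exact h3

end aux

theorem robust_quadratic_ball_iff_soc {N : ℕ} (γ : ℝ) (hγ : 0 < γ)
    (C : Matrix (Fin N) (Fin N) ℝ) (hC : C.IsSymm) (q : Fin N → ℝ) (φ : ℝ)
    (S : Matrix (Fin N) (Fin N) ℝ) (hS : IsUnit S)
    (σ τ : Fin N → ℝ)
    (hSS : Sᵀ * S = Matrix.diagonal σ)
    (hSC : Sᵀ * C * S = Matrix.diagonal τ) :
    (∀ w : Fin N → ℝ, Real.sqrt (∑ i, w i ^ 2) ≤ γ →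
        w ⬝ᵥ C.mulVec w + 2 * (q ⬝ᵥ w) ≤ φ) ↔
      ∃ (lam : ℝ) (t : Fin N → ℝ), 0 ≤ lam ∧
        (∑ i, t i) + γ ^ 2 * lam ≤ φ ∧
        ∀ i : Fin N, ((Sᵀ.mulVec q) i, t i, lam * σ i - τ i) ∈ socQ := by
  have hσpos : ∀ i, 0 < σ i := fun i => sigma_pos S hS σ hSS i
  have hdet : IsUnit S.det := (Matrix.isUnit_iff_isUnit_det S).mp hS
  have hinv2 : S * S⁻¹ = 1 := Matrix.mul_nonsing_inv S hdet
  set r : Fin N → ℝ := Sᵀ *ᵥ q with hrdef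
  have hnorm : ∀ v : Fin N → ℝ, (∑ i, (S *ᵥ v) i ^ 2) = ∑ i, σ i * v i ^ 2 := by
    intro v
    have h := quad_form_diag S 1 σ Matrix.transpose_one (by rw [Matrix.mul_one, hSS]) v
    rw [Matrix.one_mulVec] at h
    rw [← h]
    simp [dotProduct, sq]
  have hquadC : ∀ v, (S *ᵥ v) ⬝ᵥ (C *ᵥ (S *ᵥ v)) = ∑ i, τ i * v i ^ 2 :=
    fun v => quad_form_diag S C τ hC hSC v
  have hlin : ∀ v, q ⬝ᵥ (S *ᵥ v) = ∑ i, r i * v i := by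
    intro v
    rw [dotProduct_mulVec, ← Matrix.mulVec_transpose, ← hrdef]
    simp [dotProduct]
  have hexp : ∀ v : Fin N → ℝ, (∑ i, (τ i * v i ^ 2 + 2 * r i * v i))
      = (∑ i, τ i * v i ^ 2) + 2 * ∑ i, r i * v i := by
    intro v
    rw [Finset.sum_add_distrib, Finset.mul_sum]
    congr 1
    exact Finset.sum_congr rfl fun i _ => by ring
  constructor
  · intro hw
    have H : ∀ v : Fin N → ℝ, (∑ i, σ i * v i ^ 2) ≤ γ ^ 2 →
        (∑ i, (τ i * v i ^ 2 + 2 * r i * v i)) ≤ φ := by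
      intro v hv
      have hle := hw (S *ᵥ v) (by
        rw [hnorm v]
        exact (Real.sqrt_le_left hγ.le).mpr hv)
      rw [hquadC v, hlin v] at hle
      rw [hexp v]
      linarith
    obtain ⟨lam, t, h1, h2, h3⟩ := core_hard γ hγ σ τ r hσpos φ H
    refine ⟨lam, t, h1, h2, fun i => (socQ_mem_iff _ _ _).mpr
      ⟨(h3 i).1, (h3 i).2.1, (h3 i).2.2⟩⟩
  · rintro ⟨lam, t, h1, h2, h3⟩ w hw
    have hQ : ∀ i, 0 ≤ t i ∧ 0 ≤ lam * σ i - τ i ∧ r i ^ 2 ≤ t i * (lam * σ i - τ i) := by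
      intro i
      have h := (socQ_mem_iff (r i) (t i) (lam * σ i - τ i)).mp (h3 i)
      exact ⟨h.1, h.2.1, h.2.2⟩
    set v : Fin N → ℝ := S⁻¹ *ᵥ w with hvdef
    have hwv : S *ᵥ v = w := by rw [hvdef, Matrix.mulVec_mulVec, hinv2, Matrix.one_mulVec]
    have hw2 : (∑ i, w i ^ 2) ≤ γ ^ 2 := (Real.sqrt_le_left hγ.le).mp hw
    have hv : (∑ i, σ i * v i ^ 2) ≤ γ ^ 2 := by
      rw [← hnorm v, hwv]
      exact hw2
    have hcore := core_easy γ hγ σ τ r φ lam t h1 h2 hQ v hv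
    rw [hexp v] at hcore
    rw [← hwv, hquadC v, hlin v]
    linarith
end
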